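/- arXiv:2605.25753 — 2 statements merged into one kernel-verified Lean document; each statement's English description precedes it below -/
import Mathlib

section
/- Let n ≥ 1 and let a, b be nonzero integers. If the trinomial F_{n,a,b}(x) = x^{2n} + a·x^n + b is irreducible over ℚ and its Galois group over ℚ (the Galois group of its splitting field over ℚ) is abelian, then n = 2^r·3^s for some nonnegative integers r and s. -/
open Polynomial IntermediateField Module

noncomputable def F (n : ℕ) (a b : ℤ) : Polynomial ℤ :=
  X ^ (2 * n) + C a * X ^ n + C b

noncomputable def Fq (n : ℕ) (a b : ℤ) : Polynomial ℚ :=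
  (F n a b).map (Int.castRingHom ℚ)

/-- `f` is monogenic: `f` is monic, irreducible over `ℚ`, and `ℤ[θ]` is the full ring of
integers (the integral closure of `ℤ`) of the field `K = ℚ(θ) = ℚ[x]/(f)`. -/
def IsMonogenic (f : Polynomial ℤ) : Prop :=
  f.Monic ∧ Irreducible (f.map (Int.castRingHom ℚ)) ∧
    Algebra.adjoin ℤ {AdjoinRoot.root (f.map (Int.castRingHom ℚ))} =
      integralClosure ℤ (AdjoinRoot (f.map (Int.castRingHom ℚ)))

/-- The Galois group (over `ℚ`) of the splitting field of `f` is abelian. -/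
def GalAbelian (f : Polynomial ℤ) : Prop :=
  ∀ σ τ : (f.map (Int.castRingHom ℚ)).Gal, σ * τ = τ * σ

/-- The index `[O_K : ℤ[θ]]` of `ℤ[θ]` in the ring of integers of `K = ℚ[x]/(f)`. -/
noncomputable def polyIndex (f : Polynomial ℤ) : ℕ :=
  AddSubgroup.relIndex
    ((Algebra.adjoin ℤ
        {AdjoinRoot.root (f.map (Int.castRingHom ℚ))}).toSubring.toAddSubgroup)
    ((integralClosure ℤ (AdjoinRoot (f.map (Int.castRingHom ℚ)))).toSubring.toAddSubgroup)

lemma Fq_eq (k : ℕ) (a b : ℤ) :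
    Fq k a b = X ^ (2 * k) + C (a : ℚ) * X ^ k + C (b : ℚ) := by
  simp [Fq, F, Polynomial.map_add, Polynomial.map_pow, Polynomial.map_mul]

lemma Fq_natDegree (k : ℕ) (hk : k ≠ 0) (a b : ℤ) : (Fq k a b).natDegree = 2 * k := by
  rw [Fq_eq]
  compute_degree!
  all_goals omega

lemma Fq_monic (k : ℕ) (hk : k ≠ 0) (a b : ℤ) : (Fq k a b).Monic := by
  rw [Fq_eq]
  monicity!
  simp [hk, show ¬ 2*k ≤ k from by omega, show k ≤ 2*k from by omega]

lemma Fq_ne_zero (k : ℕ) (hk : k ≠ 0) (a b : ℤ) : Fq k a b ≠ 0 :=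
  (Fq_monic k hk a b).ne_zero

lemma aeval_Fq {K : Type*} [Field K] [Algebra ℚ K] (k : ℕ) (a b : ℤ) (x : K) :
    aeval x (Fq k a b) =
      x ^ (2 * k) + algebraMap ℚ K (a : ℚ) * x ^ k + algebraMap ℚ K (b : ℚ) := by
  rw [Fq_eq]
  simp [Algebra.smul_def]

lemma Fq_map_eq {L : Type*} [Field L] [Algebra ℚ L] (k : ℕ) (a b : ℤ) :
    (Fq k a b).map (algebraMap ℚ L) =
      X ^ (2 * k) + C (algebraMap ℚ L (a : ℚ)) * X ^ k + C (algebraMap ℚ L (b : ℚ)) := by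
  rw [Fq_eq]
  simp [Polynomial.map_add, Polynomial.map_mul, Polynomial.map_pow]

lemma isRoot_Fq_map {L : Type*} [Field L] [Algebra ℚ L] {k : ℕ} {a b : ℤ} {r : L}
    (h : r ∈ ((Fq k a b).map (algebraMap ℚ L)).roots) :
    r ^ (2 * k) + algebraMap ℚ L (a : ℚ) * r ^ k + algebraMap ℚ L (b : ℚ) = 0 := by
  have h2 := (mem_roots'.mp h).2
  rw [IsRoot, Fq_map_eq] at h2
  simpa using h2

lemma card_gal_eq_card_rootSet {f : ℚ[X]} (hirr : Irreducible f)
    (habel : ∀ σ τ : f.Gal, σ * τ = τ * σ)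
    (L : Type*) [Field L] [Algebra ℚ L] [Fact ((f.map (algebraMap ℚ L)).Splits)] :
    Fintype.card f.Gal = Fintype.card (f.rootSet L) := by
  have hdpos : 0 < f.natDegree := hirr.natDegree_pos
  obtain ⟨x₀⟩ : Nonempty (f.rootSet L) := by
    rw [← Fintype.card_pos_iff,
      card_rootSet_eq_natDegree hirr.separable (Fact.out : (f.map (algebraMap ℚ L)).Splits)]
    exact hdpos
  have htrans : MulAction.IsPretransitive f.Gal (f.rootSet L) :=
    Gal.galAction_isPretransitive f L hirr
  have hfix : ∀ g : f.Gal, g • x₀ = x₀ → g = 1 := by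
    intro g hg
    apply Gal.galActionHom_injective f L
    rw [map_one]
    refine Equiv.ext fun y => ?_
    obtain ⟨k, hk⟩ := htrans.exists_smul_eq x₀ y
    show g • y = y
    calc g • y = g • (k • x₀) := by rw [hk]
    _ = (g * k) • x₀ := (mul_smul g k x₀).symm
    _ = (k * g) • x₀ := by rw [habel g k]
    _ = k • (g • x₀) := mul_smul k g x₀
    _ = y := by rw [hg, hk]
  have hbij : Function.Bijective (fun g : f.Gal => g • x₀) := by
    constructor
    · intro g h hgh
      simp only at hgh
      have h1 : (h⁻¹ * g) • x₀ = x₀ := by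
        rw [mul_smul, hgh, inv_smul_smul]
      have h2 := hfix _ h1
      rwa [inv_mul_eq_one, eq_comm] at h2
    · intro y
      obtain ⟨g, hg⟩ := htrans.exists_smul_eq x₀ y
      exact ⟨g, hg⟩
  exact Fintype.card_of_bijective hbij

lemma prime_case (p : ℕ) (hp : p.Prime) (hp5 : 5 ≤ p) (a b : ℤ) (hb : b ≠ 0)
    (hirr : Irreducible (Fq p a b))
    (habel : ∀ σ τ : (Fq p a b).Gal, σ * τ = τ * σ) : False := by
  classical
  have hp0 : p ≠ 0 := hp.ne_zero
  have hdeg : (Fq p a b).natDegree = 2 * p := Fq_natDegree p hp0 a b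
  have hsep : (Fq p a b).Separable := hirr.separable
  haveI : Fact (((Fq p a b).map (algebraMap ℚ (Fq p a b).SplittingField)).Splits) :=
    ⟨SplittingField.splits _⟩
  have hrank : finrank ℚ (Fq p a b).SplittingField = 2 * p := by
    rw [← Gal.card_of_separable hsep, Nat.card_eq_fintype_card,
      card_gal_eq_card_rootSet hirr habel (Fq p a b).SplittingField]
    convert (card_rootSet_eq_natDegree hsep (SplittingField.splits _)).trans hdeg
    · rfl
    · exact Subsingleton.elim _ _
  -- find a primitive p-th root of unity in the splitting field
  have hPsep : ((Fq p a b).map (algebraMap ℚ (Fq p a b).SplittingField)).Separable := hsep.map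
  have hPsplits : ((Fq p a b).map (algebraMap ℚ (Fq p a b).SplittingField)).Splits :=
    SplittingField.splits _
  have hProots : ((Fq p a b).map (algebraMap ℚ (Fq p a b).SplittingField)).roots.card = 2 * p := by
    rw [splits_iff_card_roots.mp hPsplits, natDegree_map, hdeg]
  have hnodup : ((Fq p a b).map (algebraMap ℚ (Fq p a b).SplittingField)).roots.Nodup :=
    nodup_roots hPsep
  have hTcard :
      ((Fq p a b).map (algebraMap ℚ (Fq p a b).SplittingField)).roots.toFinset.card = 2 * p := by
    rw [Multiset.toFinset_card_of_nodup hnodup, hProots]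
  have hB : algebraMap ℚ (Fq p a b).SplittingField (b : ℚ) ≠ 0 := by
    rw [map_ne_zero_iff _ (algebraMap ℚ _).injective]
    exact_mod_cast hb
  have hQne : (X ^ 2 + Polynomial.C (algebraMap ℚ (Fq p a b).SplittingField (a : ℚ)) * X
      + Polynomial.C (algebraMap ℚ (Fq p a b).SplittingField (b : ℚ))
        : ((Fq p a b).SplittingField)[X]) ≠ 0 := by
    intro h
    have h2 := congrArg (Polynomial.eval 0) h
    simp only [Polynomial.eval_add, Polynomial.eval_mul, Polynomial.eval_pow,
      Polynomial.eval_X, Polynomial.eval_C, Polynomial.eval_zero] at h2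
    rw [zero_pow (by norm_num : (2:ℕ) ≠ 0), mul_zero, add_zero, zero_add] at h2
    exact hB h2
  have hQdeg : (X ^ 2 + Polynomial.C (algebraMap ℚ (Fq p a b).SplittingField (a : ℚ)) * X
      + Polynomial.C (algebraMap ℚ (Fq p a b).SplittingField (b : ℚ))
        : ((Fq p a b).SplittingField)[X]).natDegree ≤ 2 := by
    compute_degree
  have hmaps : ∀ r ∈ ((Fq p a b).map (algebraMap ℚ (Fq p a b).SplittingField)).roots.toFinset,
      r ^ p ∈ (X ^ 2 + Polynomial.C (algebraMap ℚ (Fq p a b).SplittingField (a : ℚ)) * X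
      + Polynomial.C (algebraMap ℚ (Fq p a b).SplittingField (b : ℚ))
        : ((Fq p a b).SplittingField)[X]).roots.toFinset := by
    intro r hr
    have h0 := isRoot_Fq_map (k := p) (a := a) (b := b) (Multiset.mem_toFinset.mp hr)
    rw [Multiset.mem_toFinset, mem_roots hQne]
    show Polynomial.eval (r ^ p) _ = 0
    simp only [Polynomial.eval_add, Polynomial.eval_mul, Polynomial.eval_pow,
      Polynomial.eval_X, Polynomial.eval_C]
    rw [← pow_mul r p 2, mul_comm p 2]
    exact h0
  have hcardlt : (X ^ 2 + Polynomial.C (algebraMap ℚ (Fq p a b).SplittingField (a : ℚ)) * X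
      + Polynomial.C (algebraMap ℚ (Fq p a b).SplittingField (b : ℚ))
        : ((Fq p a b).SplittingField)[X]).roots.toFinset.card
      < ((Fq p a b).map (algebraMap ℚ (Fq p a b).SplittingField)).roots.toFinset.card := by
    have h1 := Multiset.toFinset_card_le (X ^ 2
      + Polynomial.C (algebraMap ℚ (Fq p a b).SplittingField (a : ℚ)) * X
      + Polynomial.C (algebraMap ℚ (Fq p a b).SplittingField (b : ℚ))
        : ((Fq p a b).SplittingField)[X]).roots
    have h2 := card_roots' (X ^ 2
      + Polynomial.C (algebraMap ℚ (Fq p a b).SplittingField (a : ℚ)) * X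
      + Polynomial.C (algebraMap ℚ (Fq p a b).SplittingField (b : ℚ))
        : ((Fq p a b).SplittingField)[X])
    omega
  obtain ⟨r, hr, s, hs, hrs, hpow⟩ :=
    Finset.exists_ne_map_eq_of_card_lt_of_maps_to hcardlt hmaps
  have hs0 : s ≠ 0 := by
    intro h
    have h0 := isRoot_Fq_map (k := p) (a := a) (b := b) (Multiset.mem_toFinset.mp hs)
    rw [h] at h0
    rw [zero_pow hp0, zero_pow (by omega : 2 * p ≠ 0), mul_zero, add_zero, zero_add] at h0
    exact hB h0
  have hz1 : r / s ≠ 1 := fun h => hrs ((div_eq_one_iff_eq hs0).mp h)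
  have hzp : (r / s) ^ p = 1 := by
    rw [div_pow, hpow, div_self (pow_ne_zero _ hs0)]
  have hprim : IsPrimitiveRoot (r / s) p := by
    have hdvd : orderOf (r / s) ∣ p := orderOf_dvd_of_pow_eq_one hzp
    rcases (Nat.Prime.eq_one_or_self_of_dvd hp _ hdvd) with h | h
    · exact absurd (orderOf_eq_one_iff.mp h) hz1
    · have h2 := IsPrimitiveRoot.orderOf (r / s)
      rwa [h] at h2
  have hint : IsIntegral ℚ (r / s) := IsIntegral.of_finite ℚ _
  have hfr : finrank ℚ ℚ⟮r / s⟯ = p - 1 := by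
    rw [IntermediateField.adjoin.finrank hint, ← cyclotomic_eq_minpoly_rat hprim hp.pos,
      natDegree_cyclotomic, Nat.totient_prime hp]
  have hdvd2 : (p - 1) ∣ 2 * p := by
    refine ⟨finrank ℚ⟮r / s⟯ (Fq p a b).SplittingField, ?_⟩
    rw [← hrank, ← hfr]
    exact (Module.finrank_mul_finrank ℚ ℚ⟮r / s⟯ (Fq p a b).SplittingField).symm
  have h2 : (p - 1) ∣ 2 := by
    have hd3 : (p - 1) ∣ 2 * (p - 1) := dvd_mul_left _ 2
    have h4 := Nat.dvd_sub hdvd2 hd3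
    rwa [show 2 * p - 2 * (p - 1) = 2 from by omega] at h4
  have hle := Nat.le_of_dvd (by norm_num) h2
  omega

lemma Fq_splits_aux (p m : ℕ) (hp0 : p ≠ 0) (hm0 : m ≠ 0) (a b : ℤ)
    (hirr : Irreducible (Fq (p * m) a b)) :
    ((Fq p a b).map (algebraMap ℚ (Fq (p * m) a b).SplittingField)).Splits := by
  classical
  set E := (Fq (p * m) a b).SplittingField with hE
  have hn0 : p * m ≠ 0 := by positivity
  have hsep : (Fq (p * m) a b).Separable := hirr.separable
  have hnodup : ((Fq (p * m) a b).map (algebraMap ℚ E)).roots.Nodup := nodup_roots hsep.map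
  have hsplitsn : ((Fq (p * m) a b).map (algebraMap ℚ E)).Splits :=
    SplittingField.splits _
  have hScard : ((Fq (p * m) a b).map (algebraMap ℚ E)).roots.toFinset.card = 2 * (p * m) := by
    rw [Multiset.toFinset_card_of_nodup hnodup, splits_iff_card_roots.mp hsplitsn,
      natDegree_map, Fq_natDegree _ hn0]
  -- the map r ↦ r ^ m sends roots of `Fq (p*m)` to roots of `Fq p`
  have hPpne : (Fq p a b).map (algebraMap ℚ E) ≠ 0 := by
    intro h
    exact Fq_ne_zero p hp0 a b ((Polynomial.map_eq_zero _).mp h)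
  have himg : ∀ r ∈ ((Fq (p * m) a b).map (algebraMap ℚ E)).roots.toFinset,
      r ^ m ∈ ((Fq p a b).map (algebraMap ℚ E)).roots := by
    intro r hr
    have h0 := isRoot_Fq_map (k := p * m) (a := a) (b := b) (Multiset.mem_toFinset.mp hr)
    rw [mem_roots hPpne]
    show Polynomial.eval (r ^ m) _ = 0
    rw [Fq_map_eq]
    simp only [Polynomial.eval_add, Polynomial.eval_mul, Polynomial.eval_pow,
      Polynomial.eval_X, Polynomial.eval_C]
    rw [← pow_mul r m (2 * p), ← pow_mul r m p,
      show m * (2 * p) = 2 * (p * m) from by ring, show m * p = p * m from by ring]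
    exact h0
  -- counting fibers
  have hfib : ∀ t ∈ ((Fq (p * m) a b).map (algebraMap ℚ E)).roots.toFinset.image (· ^ m),
      (((Fq (p * m) a b).map (algebraMap ℚ E)).roots.toFinset.filter (· ^ m = t)).card ≤ m := by
    intro t ht
    have hsub : ((Fq (p * m) a b).map (algebraMap ℚ E)).roots.toFinset.filter (· ^ m = t)
        ⊆ (X ^ m - Polynomial.C t : E[X]).roots.toFinset := by
      intro x hx
      obtain ⟨-, hx2⟩ := Finset.mem_filter.mp hx
      rw [Multiset.mem_toFinset, mem_roots (monic_X_pow_sub_C t hm0).ne_zero]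
      show Polynomial.eval x _ = 0
      simp only [Polynomial.eval_sub, Polynomial.eval_pow, Polynomial.eval_X, Polynomial.eval_C]
      rw [hx2]
      ring
    calc (((Fq (p * m) a b).map (algebraMap ℚ E)).roots.toFinset.filter (· ^ m = t)).card
        ≤ (X ^ m - Polynomial.C t : E[X]).roots.toFinset.card := Finset.card_le_card hsub
    _ ≤ Multiset.card (X ^ m - Polynomial.C t : E[X]).roots := Multiset.toFinset_card_le _
    _ ≤ (X ^ m - Polynomial.C t : E[X]).natDegree := card_roots' _
    _ = m := natDegree_X_pow_sub_C
  have hcard := Finset.card_le_mul_card_image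
    (((Fq (p * m) a b).map (algebraMap ℚ E)).roots.toFinset) m hfib
  rw [hScard] at hcard
  have himgcard : 2 * p ≤
      (((Fq (p * m) a b).map (algebraMap ℚ E)).roots.toFinset.image (· ^ m)).card := by
    have h' : m * (2 * p) ≤ m *
        (((Fq (p * m) a b).map (algebraMap ℚ E)).roots.toFinset.image (· ^ m)).card := by
      rw [show m * (2 * p) = 2 * (p * m) from by ring]
      exact hcard
    exact Nat.le_of_mul_le_mul_left h' (Nat.pos_of_ne_zero hm0)
  have hsub2 : (((Fq (p * m) a b).map (algebraMap ℚ E)).roots.toFinset.image (· ^ m))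
      ⊆ ((Fq p a b).map (algebraMap ℚ E)).roots.toFinset := by
    intro t ht
    obtain ⟨r, hr, rfl⟩ := Finset.mem_image.mp ht
    exact Multiset.mem_toFinset.mpr (himg r hr)
  have hge : 2 * p ≤ Multiset.card ((Fq p a b).map (algebraMap ℚ E)).roots :=
    le_trans himgcard (le_trans (Finset.card_le_card hsub2) (Multiset.toFinset_card_le _))
  have hle : Multiset.card ((Fq p a b).map (algebraMap ℚ E)).roots ≤ 2 * p := by
    have := card_roots' ((Fq p a b).map (algebraMap ℚ E))
    rwa [natDegree_map, Fq_natDegree p hp0] at this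
  have heq : Multiset.card ((Fq p a b).map (algebraMap ℚ E)).roots
      = ((Fq p a b).map (algebraMap ℚ E)).natDegree := by
    rw [natDegree_map, Fq_natDegree p hp0]
    omega
  exact splits_iff_card_roots.mpr heq

lemma Fq_prime_factor_irreducible (p m : ℕ) (hp0 : p ≠ 0) (hm0 : m ≠ 0) (a b : ℤ)
    (hirr : Irreducible (Fq (p * m) a b)) : Irreducible (Fq p a b) := by
  have hn0 : p * m ≠ 0 := by positivity
  set E := (Fq (p * m) a b).SplittingField with hE
  have hdegn : (Fq (p * m) a b).natDegree = 2 * (p * m) := Fq_natDegree _ hn0 a b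
  have hdeg_ne : (Fq (p * m) a b).degree ≠ 0 := by
    rw [degree_eq_natDegree (Fq_ne_zero _ hn0 a b), hdegn]
    exact_mod_cast (by positivity : (2 * (p * m) : ℕ) ≠ 0) ∘ fun h => by exact_mod_cast h
  obtain ⟨θ, hθ⟩ := (SplittingField.splits (Fq (p * m) a b)).exists_eval_eq_zero (by rwa [degree_map])
  have hθ0 : aeval θ (Fq (p * m) a b) = 0 := by rwa [aeval_def, eval₂_eq_eval_map]
  have hminθ : minpoly ℚ θ = Fq (p * m) a b :=
    (minpoly.eq_of_irreducible_of_monic hirr hθ0 (Fq_monic _ hn0 a b)).symm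
  -- α = θ ^ m is a root of `Fq p`
  have hα0 : aeval (θ ^ m) (Fq p a b) = 0 := by
    rw [aeval_Fq] at hθ0 ⊢
    rw [← pow_mul θ m (2 * p), ← pow_mul θ m p,
      show m * (2 * p) = 2 * (p * m) from by ring, show m * p = p * m from by ring]
    exact hθ0
  have hintα : IsIntegral ℚ (θ ^ m) := IsIntegral.of_finite ℚ _
  have hdvd1 : minpoly ℚ (θ ^ m) ∣ Fq p a b := minpoly.dvd ℚ _ hα0
  have hgm : (minpoly ℚ (θ ^ m)).Monic := minpoly.monic hintα
  have hcomp0 : aeval θ ((minpoly ℚ (θ ^ m)).comp (X ^ m)) = 0 := by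
    rw [aeval_comp]
    simp only [map_pow, aeval_X]
    exact minpoly.aeval ℚ (θ ^ m)
  have hdvd2 : Fq (p * m) a b ∣ (minpoly ℚ (θ ^ m)).comp (X ^ m) := by
    have h := minpoly.dvd ℚ θ hcomp0
    rwa [hminθ] at h
  have hcompmonic : ((minpoly ℚ (θ ^ m)).comp (X ^ m)).Monic := by
    have hXm : (X ^ m : ℚ[X]).natDegree ≠ 0 := by
      rw [natDegree_X_pow]; exact hm0
    unfold Polynomial.Monic
    rw [Polynomial.leadingCoeff_comp hXm, hgm.leadingCoeff, monic_X_pow m |>.leadingCoeff]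
    simp
  have hcompdeg : ((minpoly ℚ (θ ^ m)).comp (X ^ m)).natDegree = (minpoly ℚ (θ ^ m)).natDegree * m := by
    rw [natDegree_comp, natDegree_X_pow]
  have hle2 : 2 * (p * m) ≤ (minpoly ℚ (θ ^ m)).natDegree * m := by
    have := natDegree_le_of_dvd hdvd2 hcompmonic.ne_zero
    rwa [hdegn, hcompdeg] at this
  have hge2 : (minpoly ℚ (θ ^ m)).natDegree ≤ 2 * p := by
    have := natDegree_le_of_dvd hdvd1 (Fq_ne_zero p hp0 a b)
    rwa [Fq_natDegree p hp0] at this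
  have heqdeg : (minpoly ℚ (θ ^ m)).natDegree = 2 * p := by
    have h' : (2 * p) * m ≤ (minpoly ℚ (θ ^ m)).natDegree * m := by
      rw [show (2 * p) * m = 2 * (p * m) from by ring]
      exact hle2
    have := Nat.le_of_mul_le_mul_right h' (Nat.pos_of_ne_zero hm0)
    omega
  have heq : Fq p a b = minpoly ℚ (θ ^ m) := by
    obtain ⟨c, hc⟩ := hdvd1
    have hc0 : c ≠ 0 := by
      intro h
      exact Fq_ne_zero p hp0 a b (by rw [hc, h, mul_zero])
    have hdegc : c.natDegree = 0 := by
      have := natDegree_mul (minpoly.ne_zero hintα) hc0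
      rw [← hc, Fq_natDegree p hp0, heqdeg] at this
      omega
    have hcC : c = Polynomial.C (c.coeff 0) := eq_C_of_natDegree_eq_zero hdegc
    have hlead : c.coeff 0 = 1 := by
      have h1 : (Fq p a b).leadingCoeff = (minpoly ℚ (θ ^ m)).leadingCoeff * c.leadingCoeff := by
        rw [hc, leadingCoeff_mul]
      rw [(Fq_monic p hp0 a b).leadingCoeff, hgm.leadingCoeff, one_mul] at h1
      rw [Polynomial.leadingCoeff, hdegc] at h1
      exact h1.symm
    rw [hc, hcC, hlead, map_one, mul_one]
  rw [heq]
  exact minpoly.irreducible hintα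

/-- If `F_{n,a,b}` is irreducible over `ℚ` with abelian Galois group,
then `n = 2^r * 3^s`. -/
theorem stmt0 (n : ℕ) (hn : 1 ≤ n) (a b : ℤ) (ha : a ≠ 0) (hb : b ≠ 0)
    (hirr : Irreducible (Fq n a b)) (habel : GalAbelian (F n a b)) :
    ∃ r s : ℕ, n = 2 ^ r * 3 ^ s := by
  have hn0 : n ≠ 0 := by omega
  have habel' : ∀ σ τ : (Fq n a b).Gal, σ * τ = τ * σ := habel
  -- every prime factor of n is at most 3
  have key : ∀ q : ℕ, q.Prime → q ∣ n → q ≤ 3 := by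
    intro q hq hqdvd
    by_contra hlt
    push_neg at hlt
    have h5 : 5 ≤ q := by
      have h2 := hq.two_le
      have h4 : q ≠ 4 := by
        intro h
        rw [h] at hq
        norm_num at hq
      omega
    obtain ⟨m, hm⟩ := hqdvd
    have hm0 : m ≠ 0 := by
      intro h
      rw [h, mul_zero] at hm
      exact hn0 hm
    rw [hm] at hirr habel'
    have hirr' : Irreducible (Fq q a b) := Fq_prime_factor_irreducible q m hq.ne_zero hm0 a b hirr
    haveI : Fact (((Fq q a b).map (algebraMap ℚ (Fq (q * m) a b).SplittingField)).Splits) :=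
      ⟨Fq_splits_aux q m hq.ne_zero hm0 a b hirr⟩
    have habel'' : ∀ σ τ : (Fq q a b).Gal, σ * τ = τ * σ := by
      intro σ τ
      haveI : Normal ℚ (Fq (q * m) a b).SplittingField := by
        convert SplittingField.instNormal (Fq (q * m) a b)
        exact Subsingleton.elim _ _
      obtain ⟨σ', hσ⟩ := Gal.restrict_surjective (Fq q a b) (Fq (q * m) a b).SplittingField σ
      obtain ⟨τ', hτ⟩ := Gal.restrict_surjective (Fq q a b) (Fq (q * m) a b).SplittingField τ
      rw [← hσ, ← hτ, ← map_mul, ← map_mul]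
      exact congrArg _ (habel' σ' τ')
    exact prime_case q hq h5 a b hb hirr' habel''
  -- assemble the factorization
  refine ⟨n.factorization 2, n.factorization 3, ?_⟩
  have hsupp : n.factorization.support ⊆ ({2, 3} : Finset ℕ) := by
    intro q hq
    rw [Nat.support_factorization] at hq
    have hqp : q.Prime := Nat.prime_of_mem_primeFactors hq
    have hqd : q ∣ n := Nat.dvd_of_mem_primeFactors hq
    have h3 := key q hqp hqd
    have h2 := hqp.two_le
    interval_cases q
    · exact Finset.mem_insert_self 2 {3}
    · exact Finset.mem_insert_of_mem (Finset.mem_singleton_self 3)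
  have hprod := Nat.factorization_prod_pow_eq_self hn0
  conv_lhs => rw [← hprod]
  rw [Finsupp.prod_of_support_subset n.factorization hsupp (fun p k => p ^ k)
    (by intro i _; rfl)]
  rw [Finset.prod_pair (by norm_num : (2:ℕ) ≠ 3)]
end

section
/- Let n ≥ 1 and let a, b be nonzero integers. Suppose the trinomial F_{n,a,b}(x) = x^{2n} + a·x^n + b is irreducible over ℚ and its Galois group over ℚ is abelian. Then for every divisor d ≥ 1 of n, the trinomial F_{d,a,b}(x) = x^{2d} + a·x^d + b is irreducible over ℚ and its Galois group over ℚ is abelian. -/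
open Polynomial

lemma Fq_comp (d m : ℕ) (a b : ℤ) : Fq (d * m) a b = (Fq d a b).comp (X ^ m) := by
  simp only [Fq, F, Polynomial.map_add, Polynomial.map_mul, Polynomial.map_pow,
    Polynomial.map_X, Polynomial.map_C, add_comp, mul_comp, pow_comp, X_comp, C_comp,
    ← pow_mul]
  ring_nf

lemma irred_of_comp {K : Type*} [Field K] (p q : Polynomial K)
    (hq : 0 < q.natDegree) (h : Irreducible (p.comp q)) : Irreducible p := by
  have key : ∀ f : Polynomial K, IsUnit (f.comp q) → IsUnit f := by
    intro f hf
    have hf0 : f ≠ 0 := by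
      rintro rfl
      simp at hf
    have hdeg : (f.comp q).natDegree = 0 := natDegree_eq_zero_of_isUnit hf
    rw [natDegree_comp] at hdeg
    have hfd : f.natDegree = 0 := by
      rcases Nat.mul_eq_zero.mp hdeg with h1 | h1
      · exact h1
      · omega
    rw [eq_C_of_natDegree_eq_zero hfd]
    exact isUnit_C.mpr (isUnit_iff_ne_zero.mpr (by
      intro h0
      apply hf0
      rw [eq_C_of_natDegree_eq_zero hfd, h0, map_zero]))
  constructor
  · intro hp
    exact h.not_isUnit (by simpa using (hp.map (compRingHom q)))
  · intro f g hfg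
    rcases h.isUnit_or_isUnit (by rw [hfg, mul_comp]) with h1 | h1
    · exact Or.inl (key f h1)
    · exact Or.inr (key g h1)

/-- If `F_{n,a,b}` is irreducible over `ℚ` with abelian Galois group, then for
every divisor `d ≥ 1` of `n`, `F_{d,a,b}` is irreducible over `ℚ` with abelian Galois group. -/
theorem stmt1 (n : ℕ) (hn : 1 ≤ n) (a b : ℤ) (ha : a ≠ 0) (hb : b ≠ 0)
    (hirr : Irreducible (Fq n a b)) (habel : GalAbelian (F n a b)) :
    ∀ d : ℕ, 1 ≤ d → d ∣ n → Irreducible (Fq d a b) ∧ GalAbelian (F d a b) := by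
  rintro d hd ⟨m, rfl⟩
  have hm : 0 < m := by
    rcases Nat.eq_zero_or_pos m with rfl | h
    · simp at hn
    · exact h
  have hcomp : Fq (d * m) a b = (Fq d a b).comp (X ^ m) := Fq_comp d m a b
  have hqdeg : (X ^ m : Polynomial ℚ).natDegree = m := natDegree_X_pow m
  have hqd : (X ^ m : Polynomial ℚ).natDegree ≠ 0 := by omega
  rw [hcomp] at hirr
  constructor
  · exact irred_of_comp _ _ (by omega) hirr
  · have hmap : (F (d * m) a b).map (Int.castRingHom ℚ) = (Fq d a b).comp (X ^ m) := hcomp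
    unfold GalAbelian at habel ⊢
    rw [hmap] at habel
    intro σ τ
    obtain ⟨σ', rfl⟩ := Polynomial.Gal.restrictComp_surjective (Fq d a b) (X ^ m) hqd σ
    obtain ⟨τ', rfl⟩ := Polynomial.Gal.restrictComp_surjective (Fq d a b) (X ^ m) hqd τ
    have := congrArg (Polynomial.Gal.restrictComp (Fq d a b) (X ^ m) hqd) (habel σ' τ')
    rw [map_mul, map_mul] at this
    exact this
end
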